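/- Let n ≥ 2 and let S₁ be any primitive non-powerful signed digraph whose underlying digraph is D₁ (the digraph on {1,...,n} with arcs (i,i+1) for 1 ≤ i ≤ n-1, (n,1), and (n-1,1)). Then the two closed walks W₁ = Q₁ + (n-1)·C_{n-1} and W₂ = Q₂ + (n-2)·C_n from vertex n-1 to vertex 1 (where Q₁ is the arc (n-1,1), Q₂ is the path (n-1,n),(n,1), C_{n-1} and C_n are the cycles of lengths n-1 and n) both have length (n-1)² + 1 and have opposite signs; i.e., there exists a pair of SSSD walks of length (n-1)² + 1 from vertex n-1 to vertex 1 in S₁. -/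
import Mathlib


/-- There is a walk of length `l` from `u` to `v` in the digraph with arc relation `A`. -/
def HasWalk {n : ℕ} (A : Fin n → Fin n → Prop) (u v : Fin n) (l : ℕ) : Prop :=
  ∃ f : ℕ → Fin n, f 0 = u ∧ f l = v ∧ ∀ i < l, A (f i) (f (i + 1))

/-- A digraph is primitive if for some `p > 0` every ordered pair of vertices is
joined by a walk of length exactly `p`. -/
def Primitive {n : ℕ} (A : Fin n → Fin n → Prop) : Prop :=
  ∃ p, 0 < p ∧ ∀ u v : Fin n, HasWalk A u v p

/-- `f` is the vertex sequence of a walk of length `l` from `u` to `v` in `A`. -/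
def IsWalkSeq {n : ℕ} (A : Fin n → Fin n → Prop) (f : ℕ → Fin n) (u v : Fin n) (l : ℕ) : Prop :=
  f 0 = u ∧ f l = v ∧ ∀ i < l, A (f i) (f (i + 1))

/-- The sign of (the length-`l` initial part of) the walk with vertex sequence `f`
in the signed digraph `S`. -/
def walkSign {n : ℕ} (S : Fin n → Fin n → ℤ) (f : ℕ → Fin n) (l : ℕ) : ℤ :=
  ∏ i ∈ Finset.range l, S (f i) (f (i + 1))

/-- The underlying digraph of a signed digraph `S`. -/
def Underlying {n : ℕ} (S : Fin n → Fin n → ℤ) : Fin n → Fin n → Prop :=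
  fun u v => S u v ≠ 0

/-- All entries of `S` are in `{0, 1, -1}`: `S` is a sign pattern / signed digraph. -/
def SignPattern {n : ℕ} (S : Fin n → Fin n → ℤ) : Prop :=
  ∀ u v, S u v = 0 ∨ S u v = 1 ∨ S u v = -1

/-- There is a pair of SSSD walks of length `l` from `u` to `v`: two walks with the
same endpoints and length but different signs. -/
def HasSSSD {n : ℕ} (S : Fin n → Fin n → ℤ) (u v : Fin n) (l : ℕ) : Prop :=
  ∃ f g : ℕ → Fin n, IsWalkSeq (Underlying S) f u v l ∧ IsWalkSeq (Underlying S) g u v l ∧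
    walkSign S f l ≠ walkSign S g l

/-- A signed digraph is non-powerful iff it contains a pair of SSSD walks. -/
def NonPowerful {n : ℕ} (S : Fin n → Fin n → ℤ) : Prop :=
  ∃ u v l, HasSSSD S u v l

/-- `exp_D(X)`: the least `p` such that every vertex is reachable from some vertex
of `X` by a walk of length exactly `p`. -/
noncomputable def setExp {n : ℕ} (A : Fin n → Fin n → Prop) (X : Finset (Fin n)) : ℕ :=
  sInf {p | ∀ v, ∃ x ∈ X, HasWalk A x v p}

/-- `F(D,k)`: the `k`th upper multiexponent. -/
noncomputable def upperMultiexp {n : ℕ} (A : Fin n → Fin n → Prop) (k : ℕ) : ℕ :=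
  sSup {e | ∃ X : Finset (Fin n), X.card = k ∧ setExp A X = e}

/-- `l_S(X)`: the least `p` such that every vertex admits a pair of SSSD walks of
length `p` from some vertex of `X`. -/
noncomputable def setBase {n : ℕ} (S : Fin n → Fin n → ℤ) (X : Finset (Fin n)) : ℕ :=
  sInf {p | ∀ v, ∃ x ∈ X, HasSSSD S x v p}

/-- `L(S,k)`: the `k`th upper base. -/
noncomputable def upperBase {n : ℕ} (S : Fin n → Fin n → ℤ) (k : ℕ) : ℕ :=
  sSup {e | ∃ X : Finset (Fin n), X.card = k ∧ setBase S X = e}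

/-- Distance from `u` to `v` in the digraph `A`. -/
noncomputable def ddist {n : ℕ} (A : Fin n → Fin n → Prop) (u v : Fin n) : ℕ :=
  sInf {l | HasWalk A u v l}

/-- Diameter of the digraph `A`. -/
noncomputable def diam {n : ℕ} (A : Fin n → Fin n → Prop) : ℕ :=
  sSup {d | ∃ u v : Fin n, ddist A u v = d}

/-- `f` is the vertex sequence of a cycle of length `p` in `A`: a closed walk of
length `p` whose first `p` vertices are pairwise distinct. -/
def IsCycleSeq {n : ℕ} (A : Fin n → Fin n → Prop) (f : ℕ → Fin n) (p : ℕ) : Prop :=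
  0 < p ∧ f p = f 0 ∧ (∀ i < p, A (f i) (f (i + 1))) ∧
    ∀ i < p, ∀ j < p, f i = f j → i = j

/-- The digraph `D₁` on `{1,…,n}` (vertex `i` is index `i-1`): the Hamiltonian cycle
`1→2→⋯→n→1` together with the extra arc `(n-1)→1`. -/
def D1 (n : ℕ) : Fin n → Fin n → Prop := fun u v =>
  (v.val = u.val + 1) ∨ (u.val = n - 1 ∧ v.val = 0) ∨ (u.val = n - 2 ∧ v.val = 0)

/-- The digraph `D₂`: `D₁` together with the extra arc `(n)→2`. -/
def D2 (n : ℕ) : Fin n → Fin n → Prop := fun u v =>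
  D1 n u v ∨ (u.val = n - 1 ∧ v.val = 1)

/-- Isomorphism of digraphs on the same vertex set `Fin n`. -/
def DigraphIso {n : ℕ} (A B : Fin n → Fin n → Prop) : Prop :=
  ∃ e : Fin n ≃ Fin n, ∀ u v, A u v ↔ B (e u) (e v)

open Finset in
lemma D1Aux.prod_period_pow (t : ℕ → ℤ) (m : ℕ) (hper : ∀ j, t (j + m) = t j) :
    ∀ k, ∏ j ∈ Finset.range (k * m), t j = (∏ j ∈ Finset.range m, t j) ^ k := by
  have hshift : ∀ q j, t (j + q * m) = t j := by
    intro q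
    induction q with
    | zero => intro j; simp
    | succ q ih =>
      intro j
      rw [show j + (q + 1) * m = (j + q * m) + m by ring, hper, ih]
  intro k
  induction k with
  | zero => simp
  | succ k ih =>
    rw [show (k + 1) * m = k * m + m by ring, Finset.prod_range_add, ih, pow_succ]
    congr 1
    exact Finset.prod_congr rfl fun j _ => by
      rw [show k * m + j = j + k * m by ring, hshift]

lemma D1Aux.telescope {n : ℕ} (S : Fin n → Fin n → ℤ) (θ : Fin n → ℤ) (lam : ℤ)
    (hθ : ∀ v, θ v * θ v = 1)
    (hrel : ∀ u v, S u v ≠ 0 → S u v = θ u * θ v * lam)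
    (f : ℕ → Fin n) : ∀ l : ℕ, (∀ i < l, S (f i) (f (i + 1)) ≠ 0) →
    walkSign S f l = θ (f 0) * θ (f l) * lam ^ l := by
  intro l
  induction l with
  | zero => intro _; simp [walkSign, hθ]
  | succ l ih =>
    intro hw
    rw [walkSign, Finset.prod_range_succ, ← walkSign,
      ih (fun i hi => hw i (by omega)), hrel _ _ (hw l (by omega)), pow_succ]
    linear_combination (θ (f 0) * θ (f (l + 1)) * lam ^ l * lam) * hθ (f l)

namespace D1Aux

/-- Arc signs along the Hamiltonian cycle `0 → 1 → ⋯ → (m+1) → 0`. -/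
def sArc (m : ℕ) (S : Fin (m + 2) → Fin (m + 2) → ℤ) (j : ℕ) : ℤ :=
  S ⟨j % (m + 2), Nat.mod_lt _ (by omega)⟩ ⟨(j + 1) % (m + 2), Nat.mod_lt _ (by omega)⟩

/-- Arc signs along the short cycle `0 → 1 → ⋯ → m → 0`. -/
def tArc (m : ℕ) (S : Fin (m + 2) → Fin (m + 2) → ℤ) (j : ℕ) : ℤ :=
  S ⟨j % (m + 1), by have := Nat.mod_lt j (y := m + 1) (by omega); omega⟩
    ⟨(j + 1) % (m + 1), by have := Nat.mod_lt (j + 1) (y := m + 1) (by omega); omega⟩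

def PP (m : ℕ) (S : Fin (m + 2) → Fin (m + 2) → ℤ) : ℤ := ∏ j ∈ Finset.range m, sArc m S j
def aa (m : ℕ) (S : Fin (m + 2) → Fin (m + 2) → ℤ) : ℤ := S ⟨m, by omega⟩ ⟨0, by omega⟩
def bb (m : ℕ) (S : Fin (m + 2) → Fin (m + 2) → ℤ) : ℤ := S ⟨m, by omega⟩ ⟨m + 1, by omega⟩
def cc (m : ℕ) (S : Fin (m + 2) → Fin (m + 2) → ℤ) : ℤ := S ⟨m + 1, by omega⟩ ⟨0, by omega⟩
def sig (m : ℕ) (S : Fin (m + 2) → Fin (m + 2) → ℤ) : ℤ := PP m S * aa m S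
def tau (m : ℕ) (S : Fin (m + 2) → Fin (m + 2) → ℤ) : ℤ := PP m S * bb m S * cc m S
def lam (m : ℕ) (S : Fin (m + 2) → Fin (m + 2) → ℤ) : ℤ := sig m S * tau m S
def theta (m : ℕ) (S : Fin (m + 2) → Fin (m + 2) → ℤ) (v : Fin (m + 2)) : ℤ :=
  lam m S ^ v.val * ∏ j ∈ Finset.range v.val, sArc m S j

section
variable {m : ℕ} {S : Fin (m + 2) → Fin (m + 2) → ℤ}
variable (hsp : SignPattern S) (hund : ∀ u v, Underlying S u v ↔ D1 (m + 2) u v)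
include hsp hund

omit hund in
lemma entry_sq (u v : Fin (m + 2)) (h : S u v ≠ 0) : S u v * S u v = 1 := by
  rcases hsp u v with h0 | h1 | h1
  · exact absurd h0 h
  · rw [h1]; norm_num
  · rw [h1]; norm_num

omit hsp in
lemma arc_ne (u v : Fin (m + 2)) (h : D1 (m + 2) u v) : S u v ≠ 0 := (hund u v).mpr h

omit hsp hund in
lemma mod_succ_cases (q j : ℕ) (hq : 0 < q) :
    (j + 1) % q = j % q + 1 ∧ j % q + 1 < q ∨ (j + 1) % q = 0 ∧ j % q + 1 = q := by
  have h : (j + 1) % q = (j % q + 1) % q := (Nat.mod_add_mod j q 1).symm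
  have hr : j % q < q := Nat.mod_lt _ hq
  rcases Nat.lt_or_ge (j % q + 1) q with h2 | h2
  · left; rw [h, Nat.mod_eq_of_lt h2]; exact ⟨rfl, h2⟩
  · right
    have h3 : j % q + 1 = q := by omega
    refine ⟨?_, h3⟩
    rw [h, h3, Nat.mod_self]

omit hsp in
lemma sArc_ne (j : ℕ) : sArc m S j ≠ 0 := by
  apply arc_ne hund
  unfold D1
  rcases mod_succ_cases (m + 2) j (by omega) with ⟨h1, h2⟩ | ⟨h1, h2⟩
  · left; exact h1
  · right; left
    refine ⟨?_, h1⟩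
    show j % (m + 2) = m + 2 - 1
    omega

lemma sArc_sq (j : ℕ) : sArc m S j * sArc m S j = 1 :=
  entry_sq hsp _ _ (sArc_ne hund j)

lemma prod_sArc_sq (k : ℕ) :
    (∏ j ∈ Finset.range k, sArc m S j) * (∏ j ∈ Finset.range k, sArc m S j) = 1 := by
  rw [← Finset.prod_mul_distrib]
  rw [Finset.prod_congr rfl fun j _ => sArc_sq hsp hund j]
  exact Finset.prod_const_one

lemma PP_sq : PP m S * PP m S = 1 := prod_sArc_sq hsp hund m

omit hsp in
lemma aa_ne : aa m S ≠ 0 := arc_ne hund _ _ (Or.inr (Or.inr ⟨by show m = m + 2 - 2; omega, rfl⟩))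

omit hsp in
lemma bb_ne : bb m S ≠ 0 := arc_ne hund _ _ (Or.inl rfl)

omit hsp in
lemma cc_ne : cc m S ≠ 0 := arc_ne hund _ _ (Or.inr (Or.inl ⟨by show m + 1 = m + 2 - 1; omega, rfl⟩))

lemma aa_sq : aa m S * aa m S = 1 := entry_sq hsp _ _ (aa_ne hund)
lemma bb_sq : bb m S * bb m S = 1 := entry_sq hsp _ _ (bb_ne hund)
lemma cc_sq : cc m S * cc m S = 1 := entry_sq hsp _ _ (cc_ne hund)

lemma sig_sq : sig m S * sig m S = 1 := by
  unfold sig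
  linear_combination (aa m S * aa m S) * PP_sq hsp hund + aa_sq hsp hund

lemma tau_sq : tau m S * tau m S = 1 := by
  unfold tau
  linear_combination (bb m S * bb m S * cc m S * cc m S) * PP_sq hsp hund +
    (cc m S * cc m S) * bb_sq hsp hund + cc_sq hsp hund

lemma lam_sq : lam m S * lam m S = 1 := by
  unfold lam
  linear_combination (tau m S * tau m S) * sig_sq hsp hund + tau_sq hsp hund

lemma abc_eq : aa m S * bb m S * cc m S = sig m S * tau m S := by
  unfold sig tau
  linear_combination (aa m S * bb m S * cc m S) * (PP_sq hsp hund).symm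

lemma theta_sq (v : Fin (m + 2)) : theta m S v * theta m S v = 1 := by
  unfold theta
  rw [mul_mul_mul_comm, ← mul_pow, lam_sq hsp hund, one_pow, one_mul]
  exact prod_sArc_sq hsp hund v.val

end
end D1Aux

namespace D1Aux

section
variable {m : ℕ} {S : Fin (m + 2) → Fin (m + 2) → ℤ}
variable (hsp : SignPattern S) (hund : ∀ u v, Underlying S u v ↔ D1 (m + 2) u v)
include hsp hund

lemma lam_pow_tau (h : sig m S ^ (m + 2) = tau m S ^ (m + 1)) :
    lam m S ^ (m + 2) = tau m S := by
  unfold lam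
  rw [mul_pow, h, ← pow_add, show (m + 1) + (m + 2) = 2 * (m + 1) + 1 by ring,
    pow_succ, pow_mul, pow_two, tau_sq hsp hund, one_pow, one_mul]

lemma lam_pow_sig (h : sig m S ^ (m + 2) = tau m S ^ (m + 1)) :
    lam m S ^ (m + 1) = sig m S := by
  unfold lam
  rw [mul_pow, ← h, ← pow_add, show (m + 1) + (m + 2) = 2 * (m + 1) + 1 by ring,
    pow_succ, pow_mul, pow_two, sig_sq hsp hund, one_pow, one_mul]

omit hsp hund in
lemma theta_zero : theta m S ⟨0, by omega⟩ = 1 := by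
  unfold theta; simp

lemma rel (h : sig m S ^ (m + 2) = tau m S ^ (m + 1)) :
    ∀ u v, S u v ≠ 0 → S u v = theta m S u * theta m S v * lam m S := by
  intro u v hne
  rcases (hund u v).mp hne with hc | ⟨hu, hv⟩ | ⟨hu, hv⟩
  · -- successor arc
    have huv : u.val + 1 < m + 2 := by have := v.isLt; omega
    have hS : sArc m S u.val = S u v := by
      unfold sArc
      congr 1
      · exact Fin.ext (Nat.mod_eq_of_lt u.isLt)
      · exact Fin.ext (show (u.val + 1) % (m + 2) = v.val by rw [Nat.mod_eq_of_lt huv]; omega)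
    rw [← hS]
    unfold theta
    rw [hc, Finset.prod_range_succ, pow_succ]
    have hQ := prod_sArc_sq hsp hund u.val
    have hL := lam_sq hsp hund
    have hX : lam m S ^ u.val * lam m S ^ u.val = 1 := by rw [← mul_pow, hL, one_pow]
    linear_combination
      (-((∏ j ∈ Finset.range u.val, sArc m S j) * (∏ j ∈ Finset.range u.val, sArc m S j) *
          lam m S * lam m S * sArc m S u.val)) * hX -
      (lam m S * lam m S * sArc m S u.val) * hQ - sArc m S u.val * hL
  · -- arc (m+1) → 0
    have hueq : u = ⟨m + 1, by omega⟩ := Fin.ext (show u.val = m + 1 by omega)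
    have hveq : v = ⟨0, by omega⟩ := Fin.ext hv
    rw [hueq, hveq, theta_zero]
    show cc m S = theta m S ⟨m + 1, by omega⟩ * 1 * lam m S
    have hsm : sArc m S m = bb m S := by
      unfold sArc bb
      congr 1
      · exact Fin.ext (Nat.mod_eq_of_lt (by omega))
      · exact Fin.ext (Nat.mod_eq_of_lt (by omega))
    unfold theta
    show cc m S = lam m S ^ (m + 1) * (∏ j ∈ Finset.range (m + 1), sArc m S j) * 1 * lam m S
    rw [Finset.prod_range_succ, hsm]
    have h3 : lam m S ^ (m + 1) * lam m S = tau m S := by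
      rw [← pow_succ]; exact lam_pow_tau hsp hund h
    have hPP := PP_sq hsp hund
    have hbb := bb_sq hsp hund
    have htaud : tau m S = PP m S * bb m S * cc m S := rfl
    have hPPd : PP m S = ∏ j ∈ Finset.range m, sArc m S j := rfl
    linear_combination (-((∏ j ∈ Finset.range m, sArc m S j) * bb m S)) * h3 -
      ((∏ j ∈ Finset.range m, sArc m S j) * bb m S) * htaud +
      (PP m S * bb m S * bb m S * cc m S) * hPPd -
      (bb m S * bb m S * cc m S) * hPP - cc m S * hbb
  · -- arc m → 0
    have hueq : u = ⟨m, by omega⟩ := Fin.ext (show u.val = m by omega)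
    have hveq : v = ⟨0, by omega⟩ := Fin.ext hv
    rw [hueq, hveq, theta_zero]
    show aa m S = theta m S ⟨m, by omega⟩ * 1 * lam m S
    unfold theta
    show aa m S = lam m S ^ m * (∏ j ∈ Finset.range m, sArc m S j) * 1 * lam m S
    have h3 : lam m S ^ m * lam m S = sig m S := by
      rw [← pow_succ]; exact lam_pow_sig hsp hund h
    have hPP := PP_sq hsp hund
    have hsigd : sig m S = PP m S * aa m S := rfl
    have hPPd : PP m S = ∏ j ∈ Finset.range m, sArc m S j := rfl
    linear_combination (-(∏ j ∈ Finset.range m, sArc m S j)) * h3 -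
      (∏ j ∈ Finset.range m, sArc m S j) * hsigd +
      (PP m S * aa m S) * hPPd - aa m S * hPP

end
end D1Aux

namespace D1Aux

/-- The walk `W₁ = (m,0) + (m+1)·C_{m+1}`. -/
def wF (m : ℕ) (k : ℕ) : Fin (m + 2) :=
  if k = 0 then ⟨m, by omega⟩
  else ⟨(k - 1) % (m + 1), by have := Nat.mod_lt (k - 1) (y := m + 1) (by omega); omega⟩

/-- The walk `W₂ = (m,m+1)(m+1,0) + m·C_{m+2}`. -/
def wG (m : ℕ) (k : ℕ) : Fin (m + 2) :=
  if k = 0 then ⟨m, by omega⟩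
  else if k = 1 then ⟨m + 1, by omega⟩
  else ⟨(k - 2) % (m + 2), Nat.mod_lt _ (by omega)⟩

section
variable {m : ℕ} {S : Fin (m + 2) → Fin (m + 2) → ℤ}
variable (hsp : SignPattern S) (hund : ∀ u v, Underlying S u v ↔ D1 (m + 2) u v)

omit hsp in
include hund in
lemma wF_walk : IsWalkSeq (Underlying S) (wF m) ⟨m, by omega⟩ ⟨0, by omega⟩ ((m + 1) ^ 2 + 1) := by
  refine ⟨rfl, ?_, ?_⟩
  · show wF m ((m + 1) ^ 2 + 1) = _
    unfold wF
    rw [if_neg (by positivity)]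
    apply Fin.ext
    show ((m + 1) ^ 2 + 1 - 1) % (m + 1) = 0
    simp [Nat.pow_mod]
  · intro i _
    rw [hund]
    unfold D1
    match i with
    | 0 =>
      right; right
      constructor
      · show m = m + 2 - 2; omega
      · show (1 - 1) % (m + 1) = 0; simp
    | (j + 1) =>
      show (((j + 1) + 1 - 1) % (m + 1) = (j + 1 - 1) % (m + 1) + 1) ∨ _
      show ((j + 1) % (m + 1) = j % (m + 1) + 1) ∨
        (j % (m + 1) = m + 2 - 1 ∧ (j + 1) % (m + 1) = 0) ∨
        (j % (m + 1) = m + 2 - 2 ∧ (j + 1) % (m + 1) = 0)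
      rcases mod_succ_cases (m + 1) j (by omega) with ⟨h1, h2⟩ | ⟨h1, h2⟩
      · left; exact h1
      · right; right
        exact ⟨by omega, h1⟩

omit hsp in
include hund in
lemma wG_walk : IsWalkSeq (Underlying S) (wG m) ⟨m, by omega⟩ ⟨0, by omega⟩ ((m + 1) ^ 2 + 1) := by
  have hsq : (m + 1) ^ 2 = m * m + 2 * m + 1 := by ring
  refine ⟨rfl, ?_, ?_⟩
  · show wG m ((m + 1) ^ 2 + 1) = _
    unfold wG
    rw [if_neg (by omega), if_neg (by omega)]
    apply Fin.ext
    show ((m + 1) ^ 2 + 1 - 2) % (m + 2) = 0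
    have : (m + 1) ^ 2 + 1 - 2 = m * (m + 2) := by
      have : m * (m + 2) = m * m + 2 * m := by ring
      omega
    rw [this]
    exact Nat.mul_mod_left m (m + 2)
  · intro i _
    rw [hund]
    unfold D1
    match i with
    | 0 =>
      left
      show m + 1 = m + 1
      rfl
    | 1 =>
      right; left
      constructor
      · show m + 1 = m + 2 - 1; omega
      · show (2 - 2) % (m + 2) = 0; simp
    | (j + 2) =>
      show (((j + 2) + 1 - 2) % (m + 2) = (j + 2 - 2) % (m + 2) + 1) ∨
        ((j + 2 - 2) % (m + 2) = m + 2 - 1 ∧ ((j + 2) + 1 - 2) % (m + 2) = 0) ∨ _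
      show ((j + 1) % (m + 2) = j % (m + 2) + 1) ∨
        (j % (m + 2) = m + 2 - 1 ∧ (j + 1) % (m + 2) = 0) ∨
        (j % (m + 2) = m + 2 - 2 ∧ (j + 1) % (m + 2) = 0)
      rcases mod_succ_cases (m + 2) j (by omega) with ⟨h1, h2⟩ | ⟨h1, h2⟩
      · left; exact h1
      · right; left
        exact ⟨by omega, h1⟩

end
end D1Aux

namespace D1Aux

section
variable {m : ℕ} {S : Fin (m + 2) → Fin (m + 2) → ℤ}

lemma tArc_period (j : ℕ) : tArc m S (j + (m + 1)) = tArc m S j := by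
  unfold tArc
  congr 1
  · exact Fin.ext (Nat.add_mod_right j (m + 1))
  · exact Fin.ext (by
      show (j + (m + 1) + 1) % (m + 1) = (j + 1) % (m + 1)
      rw [show j + (m + 1) + 1 = (j + 1) + (m + 1) by omega]
      exact Nat.add_mod_right _ _)

lemma sArc_period (j : ℕ) : sArc m S (j + (m + 2)) = sArc m S j := by
  unfold sArc
  congr 1
  · exact Fin.ext (Nat.add_mod_right j (m + 2))
  · exact Fin.ext (by
      show (j + (m + 2) + 1) % (m + 2) = (j + 1) % (m + 2)
      rw [show j + (m + 2) + 1 = (j + 1) + (m + 2) by omega]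
      exact Nat.add_mod_right _ _)

lemma sArc_m : sArc m S m = bb m S := by
  unfold sArc bb
  congr 1
  · exact Fin.ext (Nat.mod_eq_of_lt (by omega))
  · exact Fin.ext (Nat.mod_eq_of_lt (by omega))

lemma sArc_m1 : sArc m S (m + 1) = cc m S := by
  unfold sArc cc
  congr 1
  · exact Fin.ext (Nat.mod_eq_of_lt (by omega))
  · exact Fin.ext (Nat.mod_self (m + 2))

lemma prod_tArc : ∏ i ∈ Finset.range (m + 1), tArc m S i = sig m S := by
  rw [Finset.prod_range_succ]
  have h1 : ∀ j ∈ Finset.range m, tArc m S j = sArc m S j := by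
    intro j hj
    rw [Finset.mem_range] at hj
    unfold tArc sArc
    congr 1
    · exact Fin.ext (by
        show j % (m + 1) = j % (m + 2)
        rw [Nat.mod_eq_of_lt (by omega), Nat.mod_eq_of_lt (by omega)])
    · exact Fin.ext (by
        show (j + 1) % (m + 1) = (j + 1) % (m + 2)
        rw [Nat.mod_eq_of_lt (by omega), Nat.mod_eq_of_lt (by omega)])
  have h2 : tArc m S m = aa m S := by
    unfold tArc aa
    congr 1
    · exact Fin.ext (Nat.mod_eq_of_lt (by omega))
    · exact Fin.ext (Nat.mod_self (m + 1))
  rw [Finset.prod_congr rfl h1, h2]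
  rfl

lemma prod_sArc : ∏ i ∈ Finset.range (m + 2), sArc m S i = tau m S := by
  rw [Finset.prod_range_succ, Finset.prod_range_succ, sArc_m, sArc_m1]
  rfl

lemma wF_sign : walkSign S (wF m) ((m + 1) ^ 2 + 1) = sig m S ^ (m + 1) * aa m S := by
  unfold walkSign
  rw [Finset.prod_range_succ']
  have h0 : S (wF m 0) (wF m 1) = aa m S := by
    have : wF m 1 = ⟨0, by omega⟩ := Fin.ext (by show (1 - 1) % (m + 1) = 0; simp)
    rw [this]
    rfl
  have h1 : ∀ i ∈ Finset.range ((m + 1) ^ 2), S (wF m (i + 1)) (wF m (i + 1 + 1)) = tArc m S i := by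
    intro i _
    rfl
  rw [Finset.prod_congr rfl h1, h0, show (m + 1) ^ 2 = (m + 1) * (m + 1) from pow_two _,
    prod_period_pow (tArc m S) (m + 1) tArc_period (m + 1), prod_tArc]

lemma wG_sign : walkSign S (wG m) ((m + 1) ^ 2 + 1) = tau m S ^ m * cc m S * bb m S := by
  unfold walkSign
  rw [show (m + 1) ^ 2 + 1 = (m * (m + 2) + 1) + 1 by ring, Finset.prod_range_succ',
    Finset.prod_range_succ']
  have h0 : S (wG m 0) (wG m 1) = bb m S := rfl
  have h1 : S (wG m (0 + 1)) (wG m (0 + 1 + 1)) = cc m S := by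
    have : wG m (0 + 1 + 1) = ⟨0, by omega⟩ := Fin.ext (by show (2 - 2) % (m + 2) = 0; simp)
    rw [this]
    rfl
  have h2 : ∀ i ∈ Finset.range (m * (m + 2)),
      S (wG m (i + 1 + 1)) (wG m (i + 1 + 1 + 1)) = sArc m S i := by
    intro i _
    rfl
  rw [Finset.prod_congr rfl h2, h0, h1,
    show m * (m + 2) = (m + 2) * m by ring]
  rw [mul_comm (m + 2) m, prod_period_pow (sArc m S) (m + 2) sArc_period m, prod_sArc]

end
end D1Aux

namespace D1Aux

section
variable {m : ℕ} {S : Fin (m + 2) → Fin (m + 2) → ℤ}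
variable (hsp : SignPattern S) (hund : ∀ u v, Underlying S u v ↔ D1 (m + 2) u v)
include hsp hund

lemma sig_tau_rel (heq : sig m S ^ (m + 1) * aa m S = tau m S ^ m * cc m S * bb m S) :
    sig m S ^ (m + 2) = tau m S ^ (m + 1) := by
  rw [show m + 2 = (m + 1) + 1 from rfl, pow_succ, pow_succ]
  have habc := abc_eq hsp hund
  have haa := aa_sq hsp hund
  have hsig := sig_sq hsp hund
  linear_combination (sig m S * aa m S) * heq - (sig m S ^ (m + 1) * sig m S) * haa +
    (tau m S ^ m * sig m S) * habc + (tau m S ^ m * tau m S) * hsig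

end
end D1Aux

/-- In a primitive non-powerful signed digraph with underlying digraph `D₁`, there
is a pair of SSSD walks of length `(n-1)² + 1` from vertex `n-1` (index `n-2`) to
vertex `1` (index `0`). -/
theorem D1_SSSD_walk {n : ℕ} (hn : 2 ≤ n) (S : Fin n → Fin n → ℤ)
    (hsp : SignPattern S) (hund : ∀ u v, Underlying S u v ↔ D1 n u v)
    (hprim : Primitive (Underlying S)) (hnp : NonPowerful S) :
    HasSSSD S ⟨n - 2, by omega⟩ ⟨0, by omega⟩ ((n - 1) ^ 2 + 1) := by
  obtain ⟨m, rfl⟩ : ∃ m, n = m + 2 := ⟨n - 2, by omega⟩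
  refine ⟨D1Aux.wF m, D1Aux.wG m, D1Aux.wF_walk hund, D1Aux.wG_walk hund, ?_⟩
  show walkSign S (D1Aux.wF m) ((m + 1) ^ 2 + 1) ≠ walkSign S (D1Aux.wG m) ((m + 1) ^ 2 + 1)
  rw [D1Aux.wF_sign, D1Aux.wG_sign]
  intro heq
  have h := D1Aux.sig_tau_rel hsp hund heq
  have hrel := D1Aux.rel hsp hund h
  obtain ⟨u, v, l, f, g, ⟨hf0, hf1, hfa⟩, ⟨hg0, hg1, hga⟩, hne⟩ := hnp
  have e1 := D1Aux.telescope S (D1Aux.theta m S) (D1Aux.lam m S)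
    (D1Aux.theta_sq hsp hund) hrel f l hfa
  have e2 := D1Aux.telescope S (D1Aux.theta m S) (D1Aux.lam m S)
    (D1Aux.theta_sq hsp hund) hrel g l hga
  apply hne
  rw [e1, e2, hf0, hg0, hf1, hg1]
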